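/- arXiv:1311.7633 — 3 statements merged into one kernel-verified Lean document; each statement's English description precedes it below -/
import Mathlib

section
/- Let c : (ℤ²)³ → ℝ be defined by c(g₀,g₁,g₂) = α(g₁ − g₀)·β(g₂ − g₁), where α(p,q) = p and β(p,q) = q. Then c does not lie at bounded distance from any alternating cochain: for every alternating function f : (ℤ²)³ → ℝ, sup over (g₀,g₁,g₂) ∈ (ℤ²)³ of |c(g₀,g₁,g₂) − f(g₀,g₁,g₂)| = +∞. -/
/-- The cup-product cocycle `c(g₀,g₁,g₂) = α(g₁−g₀)·β(g₂−g₁)` on `ℤ²` is not at bounded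
distance from any alternating cochain: for every alternating `f : (ℤ²)³ → ℝ`, the difference
`|c − f|` is unbounded. -/
theorem cup_product_not_bounded_distance_from_alternating
    (c : (Fin 3 → ℤ × ℤ) → ℝ)
    (hc : ∀ g : Fin 3 → ℤ × ℤ, c g = ((g 1 - g 0).1 : ℝ) * ((g 2 - g 1).2 : ℝ))
    (f : (Fin 3 → ℤ × ℤ) → ℝ)
    (hf : ∀ (σ : Equiv.Perm (Fin 3)) (g : Fin 3 → ℤ × ℤ),
      f (fun i => g (σ i)) = ((Equiv.Perm.sign σ : ℤ) : ℝ) * f g) :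
    ∀ C : ℝ, ∃ g : Fin 3 → ℤ × ℤ, C < |c g - f g| := by
  intro C
  obtain ⟨m, hm⟩ := exists_nat_gt (2 * |C|)
  set n : ℤ := (m : ℤ) + 1 with hn
  have hnR : 2 * |C| < ((n : ℝ))^2 := by
    have h1 : (m : ℝ) < (n : ℝ) := by push_cast [hn]; linarith
    have h2 : (n : ℝ) ≤ (n : ℝ)^2 := by
      have : (1 : ℝ) ≤ (n : ℝ) := by push_cast [hn]; linarith [Nat.cast_nonneg (α := ℝ) m]
      nlinarith
    linarith
  set g0 : Fin 3 → ℤ × ℤ := ![(0,0), (0,n), (n,0)] with hg0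
  set g1 : Fin 3 → ℤ × ℤ := ![(n,0), (0,0), (0,n)] with hg1
  have hc0 : c g0 = 0 := by
    rw [hc]; simp [hg0]
  have hc1 : c g1 = -((n : ℝ))^2 := by
    rw [hc]; simp [hg1]; push_cast; ring
  have hfσ : f g1 = f g0 := by
    have key := hf ((Equiv.swap 0 1 * Equiv.swap 0 2 : Equiv.Perm (Fin 3))) g0
    have hgeq : (fun i => g0 (((Equiv.swap 0 1 * Equiv.swap 0 2 : Equiv.Perm (Fin 3))) i)) = g1 := by
      funext i
      fin_cases i <;> simp [hg0, hg1, Equiv.swap_apply_def]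
    rw [hgeq] at key
    simpa using key
  by_cases h : C < |c g0 - f g0|
  · exact ⟨g0, h⟩
  · refine ⟨g1, ?_⟩
    push_neg at h
    have hC : |c g0 - f g0| ≤ |C| := le_trans h (le_abs_self C)
    have htri : ((n:ℝ))^2 ≤ |c g1 - f g1| + |c g0 - f g0| := by
      rw [hc0, hc1, hfσ]
      have h2 : |(-((n:ℝ))^2 - f g0) - (0 - f g0)| ≤ |(-((n:ℝ))^2 - f g0)| + |0 - f g0| :=
        abs_sub _ _
      have h3 : ((n:ℝ))^2 = |(-((n:ℝ))^2 - f g0) - (0 - f g0)| := by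
        rw [abs_of_nonpos] <;> [ring; nlinarith [sq_nonneg ((n:ℝ))]]
      linarith
    have hCle : C ≤ |C| := le_abs_self C
    linarith
end

section
/- Let G be a group, V a normed real vector space, and n ≥ 0. Let δ^n : C^n(G,V) → C^{n+1}(G,V) be the homogeneous differential (δ^n φ)(g₀,…,g_{n+1}) = Σ_{j=0}^{n+1} (−1)^j φ(g₀,…,ĝ_j,…,g_{n+1}). Then δ^{n} ∘ alt^{n} = alt^{n+1} ∘ δ^{n}. Consequently, for every quasi-cocycle φ ∈ C^n(G,V) (i.e., ‖δ^n φ‖_∞ < ∞), the alternating cochain alt^n(φ) is also a quasi-cocycle, with defect ‖δ^n(alt^n φ)‖_∞ ≤ ‖δ^n φ‖_∞. -/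
open scoped ENNReal

/-- The alternation operator on homogeneous `n`-cochains. -/
noncomputable def altCochain {G V : Type*} [AddCommGroup V] [Module ℝ V] (n : ℕ)
    (φ : (Fin (n + 1) → G) → V) : (Fin (n + 1) → G) → V :=
  fun g => (((n + 1).factorial : ℝ))⁻¹ •
    ∑ σ : Equiv.Perm (Fin (n + 1)), ((Equiv.Perm.sign σ : ℤ) : ℝ) • φ (fun i => g (σ i))

/-- The homogeneous differential `(δⁿφ)(g₀,…,g_{n+1}) = Σ_j (−1)^j φ(g₀,…,ĝ_j,…,g_{n+1})`. -/
def hdelta {G V : Type*} [AddCommGroup V] [Module ℝ V] (n : ℕ)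
    (φ : (Fin (n + 1) → G) → V) : (Fin (n + 2) → G) → V :=
  fun g => ∑ j : Fin (n + 2), ((-1 : ℝ) ^ (j : ℕ)) • φ (fun k => g (j.succAbove k))

noncomputable def myE (n : ℕ) (p : Fin (n + 2) × Equiv.Perm (Fin (n + 1))) :
    Equiv.Perm (Fin (n + 2)) :=
  (Fin.cycleRange p.1)⁻¹ * Equiv.Perm.decomposeFin.symm (0, p.2)

lemma myE_apply_succ (n : ℕ) (j : Fin (n + 2)) (σ : Equiv.Perm (Fin (n + 1))) (k : Fin (n + 1)) :
    myE n (j, σ) k.succ = j.succAbove (σ k) := by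
  have h1 : Equiv.Perm.decomposeFin.symm (0, σ) k.succ = (σ k).succ := by
    rw [Equiv.Perm.decomposeFin_symm_apply_succ]
    simp
  have h2 : (Fin.cycleRange j)⁻¹ ((σ k).succ) = j.succAbove (σ k) := by
    rw [Equiv.Perm.inv_eq_iff_eq, Fin.cycleRange_succAbove]
  simp [myE, Equiv.Perm.mul_apply, h1, h2]

lemma myE_apply_zero (n : ℕ) (j : Fin (n + 2)) (σ : Equiv.Perm (Fin (n + 1))) :
    myE n (j, σ) 0 = j := by
  have h1 : Equiv.Perm.decomposeFin.symm (0, σ) 0 = 0 :=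
    Equiv.Perm.decomposeFin_symm_apply_zero 0 σ
  have h2 : (Fin.cycleRange j)⁻¹ (0 : Fin (n + 2)) = j := by
    rw [Equiv.Perm.inv_eq_iff_eq, Fin.cycleRange_self]
  simp [myE, Equiv.Perm.mul_apply, h1, h2]

lemma myE_sign (n : ℕ) (j : Fin (n + 2)) (σ : Equiv.Perm (Fin (n + 1))) :
    Equiv.Perm.sign (myE n (j, σ)) = (-1) ^ (j : ℕ) * Equiv.Perm.sign σ := by
  simp [myE, Fin.sign_cycleRange, Equiv.Perm.decomposeFin.symm_sign]

lemma myE_bij (n : ℕ) : Function.Bijective (myE n) := by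
  rw [Fintype.bijective_iff_injective_and_card]
  constructor
  · rintro ⟨j, σ⟩ ⟨j', σ'⟩ h
    have hj : j = j' := by
      have := congrArg (fun τ : Equiv.Perm (Fin (n + 2)) => τ 0) h
      simpa [myE_apply_zero] using this
    subst hj
    have h2 : Equiv.Perm.decomposeFin.symm (0, σ) = Equiv.Perm.decomposeFin.symm (0, σ') :=
      mul_left_cancel (a := (Fin.cycleRange j)⁻¹) h
    have := Equiv.Perm.decomposeFin.symm.injective h2
    simpa using this
  · simp [Fintype.card_perm, Nat.factorial_succ]

theorem key_eq {G V : Type*} [NormedAddCommGroup V] [NormedSpace ℝ V] (n : ℕ)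
    (φ : (Fin (n + 1) → G) → V) :
    hdelta n (altCochain n φ) = altCochain (n + 1) (hdelta n φ) := by
  funext g
  set S : V := ∑ τ : Equiv.Perm (Fin (n + 2)),
      ((Equiv.Perm.sign τ : ℤ) : ℝ) • φ (fun k => g (τ k.succ)) with hS
  have hSprod : S = ∑ j : Fin (n + 2), ∑ σ : Equiv.Perm (Fin (n + 1)),
      ((-1 : ℝ) ^ (j : ℕ) * ((Equiv.Perm.sign σ : ℤ) : ℝ)) •
        φ (fun k => g (j.succAbove (σ k))) := by
    rw [hS]
    have hterm : ∀ p : Fin (n + 2) × Equiv.Perm (Fin (n + 1)),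
        ((-1 : ℝ) ^ (p.1 : ℕ) * ((Equiv.Perm.sign p.2 : ℤ) : ℝ)) •
          φ (fun k => g (p.1.succAbove (p.2 k))) =
        ((Equiv.Perm.sign (myE n p) : ℤ) : ℝ) • φ (fun k => g (myE n p k.succ)) := by
      rintro ⟨j, σ⟩
      have hs : ((Equiv.Perm.sign (myE n (j, σ)) : ℤ) : ℝ) =
          (-1 : ℝ) ^ (j : ℕ) * ((Equiv.Perm.sign σ : ℤ) : ℝ) := by
        rw [myE_sign]; push_cast; ring
      simp only [myE_apply_succ, hs]
    calc (∑ τ : Equiv.Perm (Fin (n + 2)),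
          ((Equiv.Perm.sign τ : ℤ) : ℝ) • φ (fun k => g (τ k.succ)))
        = ∑ p : Fin (n + 2) × Equiv.Perm (Fin (n + 1)),
            ((-1 : ℝ) ^ (p.1 : ℕ) * ((Equiv.Perm.sign p.2 : ℤ) : ℝ)) •
              φ (fun k => g (p.1.succAbove (p.2 k))) :=
          (Fintype.sum_bijective (myE n) (myE_bij n) _ _ hterm).symm
      _ = _ := by rw [Fintype.sum_prod_type]
  have hfac : (((n + 1 + 1).factorial : ℝ))⁻¹ * ((n + 2 : ℕ) : ℝ) =
      (((n + 1).factorial : ℝ))⁻¹ := by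
    rw [Nat.factorial_succ]
    have h1 : ((n + 1).factorial : ℝ) ≠ 0 := Nat.cast_ne_zero.mpr (Nat.factorial_ne_zero _)
    have h2 : ((n + 1 + 1 : ℕ) : ℝ) ≠ 0 := by positivity
    field_simp
    push_cast; ring
  have hL : hdelta n (altCochain n φ) g = (((n + 1).factorial : ℝ))⁻¹ • S := by
    rw [hSprod, Finset.smul_sum]
    simp only [hdelta, altCochain, Finset.smul_sum, smul_smul]
    refine Finset.sum_congr rfl fun j _ => ?_
    refine Finset.sum_congr rfl fun σ _ => ?_
    congr 1
    ring
  have hj : ∀ j : Fin (n + 2),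
      (∑ τ : Equiv.Perm (Fin (n + 2)),
        (((Equiv.Perm.sign τ : ℤ) : ℝ) * (-1 : ℝ) ^ (j : ℕ)) •
          φ (fun k => g (τ (j.succAbove k)))) = S := by
    intro j
    rw [hS]
    refine (Fintype.sum_equiv (Equiv.mulRight (Fin.cycleRange j)) _ _ ?_).symm
    intro τ
    have happ : ∀ k : Fin (n + 1), (τ * Fin.cycleRange j) (j.succAbove k) = τ k.succ := by
      intro k; rw [Equiv.Perm.mul_apply, Fin.cycleRange_succAbove]
    have hpow : ((-1 : ℝ) ^ (j : ℕ)) * ((-1 : ℝ) ^ (j : ℕ)) = 1 := by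
      rw [← pow_add]
      exact Even.neg_one_pow ⟨(j : ℕ), rfl⟩
    have hsg : ((Equiv.Perm.sign (τ * Fin.cycleRange j) : ℤ) : ℝ) * (-1 : ℝ) ^ (j : ℕ) =
        ((Equiv.Perm.sign τ : ℤ) : ℝ) := by
      rw [Equiv.Perm.sign_mul, Fin.sign_cycleRange]
      push_cast
      rw [mul_assoc, hpow, mul_one]
    simp only [Equiv.coe_mulRight, happ, hsg]
  have hR : altCochain (n + 1) (hdelta n φ) g = (((n + 1).factorial : ℝ))⁻¹ • S := by
    have expand : (∑ τ : Equiv.Perm (Fin (n + 2)), ((Equiv.Perm.sign τ : ℤ) : ℝ) •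
          ∑ j : Fin (n + 2), ((-1 : ℝ) ^ (j : ℕ)) • φ (fun k => g (τ (j.succAbove k))))
        = ∑ j : Fin (n + 2), ∑ τ : Equiv.Perm (Fin (n + 2)),
            (((Equiv.Perm.sign τ : ℤ) : ℝ) * (-1 : ℝ) ^ (j : ℕ)) •
              φ (fun k => g (τ (j.succAbove k))) := by
      simp only [Finset.smul_sum, smul_smul]
      rw [Finset.sum_comm]
    calc altCochain (n + 1) (hdelta n φ) g
        = (((n + 1 + 1).factorial : ℝ))⁻¹ • ∑ j : Fin (n + 2), S := by
          simp only [altCochain, hdelta]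
          rw [expand]
          congr 1
          exact Finset.sum_congr rfl fun j _ => hj j
      _ = (((n + 1).factorial : ℝ))⁻¹ • S := by
          rw [Finset.sum_const, Finset.card_univ, Fintype.card_fin,
            ← Nat.cast_smul_eq_nsmul ℝ, smul_smul, hfac]
  rw [hL, hR]

lemma alt_nnnorm_le {G V : Type*} [NormedAddCommGroup V] [NormedSpace ℝ V] (m : ℕ)
    (ψ : (Fin (m + 1) → G) → V) (g : Fin (m + 1) → G) :
    (‖altCochain m ψ g‖₊ : ℝ≥0∞) ≤ ⨆ h : Fin (m + 1) → G, (‖ψ h‖₊ : ℝ≥0∞) := by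
  set M := ⨆ h : Fin (m + 1) → G, (‖ψ h‖₊ : ℝ≥0∞) with hM
  have hterm : ∀ σ : Equiv.Perm (Fin (m + 1)),
      (‖((Equiv.Perm.sign σ : ℤ) : ℝ) • ψ (fun i => g (σ i))‖₊ : ℝ≥0∞) ≤ M := by
    intro σ
    have h1 : ‖((Equiv.Perm.sign σ : ℤ) : ℝ)‖₊ = 1 := by
      rcases Int.units_eq_one_or (Equiv.Perm.sign σ) with h | h <;> simp [h]
    rw [nnnorm_smul, h1, one_mul]
    exact le_iSup (fun h => (‖ψ h‖₊ : ℝ≥0∞)) (fun i => g (σ i))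
  have hsum : (‖∑ σ : Equiv.Perm (Fin (m + 1)), ((Equiv.Perm.sign σ : ℤ) : ℝ) •
      ψ (fun i => g (σ i))‖₊ : ℝ≥0∞) ≤ ((m + 1).factorial : ℝ≥0∞) * M := by
    calc (‖∑ σ : Equiv.Perm (Fin (m + 1)), ((Equiv.Perm.sign σ : ℤ) : ℝ) •
          ψ (fun i => g (σ i))‖₊ : ℝ≥0∞)
        ≤ ∑ σ : Equiv.Perm (Fin (m + 1)),
            (‖((Equiv.Perm.sign σ : ℤ) : ℝ) • ψ (fun i => g (σ i))‖₊ : ℝ≥0∞) := by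
          rw [← ENNReal.coe_finset_sum]
          exact_mod_cast nnnorm_sum_le _ _
      _ ≤ ∑ _σ : Equiv.Perm (Fin (m + 1)), M := Finset.sum_le_sum fun σ _ => hterm σ
      _ = ((m + 1).factorial : ℝ≥0∞) * M := by
          rw [Finset.sum_const, Finset.card_univ, Fintype.card_perm, Fintype.card_fin,
            nsmul_eq_mul]
  have hfacne : ((m + 1).factorial : ℝ≥0∞) ≠ 0 :=
    Nat.cast_ne_zero.mpr (Nat.factorial_ne_zero _)
  have hc : (‖(((m + 1).factorial : ℝ))⁻¹‖₊ : ℝ≥0∞) = ((m + 1).factorial : ℝ≥0∞)⁻¹ := by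
    rw [nnnorm_inv]
    rw [ENNReal.coe_inv (by simp [Nat.factorial_ne_zero])]
    congr 1
    simp
  calc (‖altCochain m ψ g‖₊ : ℝ≥0∞)
      = (‖(((m + 1).factorial : ℝ))⁻¹‖₊ : ℝ≥0∞) *
        (‖∑ σ : Equiv.Perm (Fin (m + 1)), ((Equiv.Perm.sign σ : ℤ) : ℝ) •
          ψ (fun i => g (σ i))‖₊ : ℝ≥0∞) := by
        rw [altCochain, nnnorm_smul, ENNReal.coe_mul]
    _ ≤ ((m + 1).factorial : ℝ≥0∞)⁻¹ * (((m + 1).factorial : ℝ≥0∞) * M) := by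
        rw [hc]; exact mul_le_mul_right hsum _
    _ = M := by
        rw [← mul_assoc, ENNReal.inv_mul_cancel hfacne (ENNReal.natCast_ne_top _), one_mul]

/-- `δⁿ ∘ altⁿ = alt^{n+1} ∘ δⁿ`; consequently the alternation of a quasi-cocycle is a
quasi-cocycle with no larger defect. -/
theorem hdelta_altCochain_comm {G : Type*} {V : Type*} [NormedAddCommGroup V]
    [NormedSpace ℝ V] (n : ℕ) (φ : (Fin (n + 1) → G) → V) :
    hdelta n (altCochain n φ) = altCochain (n + 1) (hdelta n φ) ∧
    (⨆ g : Fin (n + 2) → G, (‖hdelta n (altCochain n φ) g‖₊ : ℝ≥0∞)) ≤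
      ⨆ g : Fin (n + 2) → G, (‖hdelta n φ g‖₊ : ℝ≥0∞) := by
  have he := key_eq n φ
  refine ⟨he, iSup_le fun g => ?_⟩
  rw [he]
  exact alt_nnnorm_le (n + 1) (hdelta n φ) g
end

section
/- Let X be a δ-hyperbolic geodesic metric space and let 𝒜 be a family of σ-quasi-convex subsets of X that is geometrically separated. Then 𝒜 is K-linearly geometrically separated for some K ≥ 0: there exists K such that for any distinct A, B ∈ 𝒜 and every D ≥ 1, diam(N_D(A) ∩ B) ≤ K·D, where N_D(A) is the closed D-neighborhood of A. -/
open scoped ENNReal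

/-- `f` is a (unit-speed) geodesic from `x` to `y`: an isometric embedding of
`[0, dist x y]` sending the endpoints to `x` and `y`. -/
def IsGeodesicFrom {X : Type*} [MetricSpace X] (f : ℝ → X) (x y : X) : Prop :=
  f 0 = x ∧ f (dist x y) = y ∧
    ∀ s ∈ Set.Icc (0 : ℝ) (dist x y), ∀ t ∈ Set.Icc (0 : ℝ) (dist x y),
      dist (f s) (f t) = |s - t|

section Aux

variable {X : Type*} [MetricSpace X]

lemma IsGeodesicFrom.continuousOn {f : ℝ → X} {x y : X} (hf : IsGeodesicFrom f x y) :
    ContinuousOn f (Set.Icc 0 (dist x y)) := by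
  have : LipschitzOnWith 1 f (Set.Icc 0 (dist x y)) := by
    intro s hs t ht
    rw [edist_dist, edist_dist, hf.2.2 s hs t ht, ← Real.dist_eq]
    simp
  exact this.continuousOn

lemma IsGeodesicFrom.image_compact {f : ℝ → X} {x y : X} (hf : IsGeodesicFrom f x y) :
    IsCompact (f '' Set.Icc 0 (dist x y)) :=
  isCompact_Icc.image_of_continuousOn hf.continuousOn

lemma IsGeodesicFrom.image_nonempty {f : ℝ → X} {x y : X} (_hf : IsGeodesicFrom f x y) :
    (f '' Set.Icc 0 (dist x y)).Nonempty :=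
  ⟨f 0, Set.mem_image_of_mem f ⟨le_refl 0, dist_nonneg⟩⟩

/-- Key geometric lemma: a point of a geodesic `[x, y]` that is far from both endpoints,
where both endpoints are `E`-close to a `σ`-quasi-convex set `A`, lies within `σ + 2δ`
of `A`. -/
lemma middle_near {δ σ : ℝ} (hδ : 0 ≤ δ)
    (geodesic : ∀ x y : X, ∃ f : ℝ → X, IsGeodesicFrom f x y)
    (thin : ∀ (x y z : X) (f g h : ℝ → X), IsGeodesicFrom f x y → IsGeodesicFrom g y z →
      IsGeodesicFrom h x z → ∀ t ∈ Set.Icc (0 : ℝ) (dist x z),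
        Metric.infDist (h t)
          (f '' Set.Icc (0 : ℝ) (dist x y) ∪ g '' Set.Icc (0 : ℝ) (dist y z)) ≤ δ)
    {A : Set X}
    (hqcA : ∀ a ∈ A, ∀ b ∈ A, ∀ f : ℝ → X, IsGeodesicFrom f a b →
      ∀ t ∈ Set.Icc (0 : ℝ) (dist a b), Metric.infDist (f t) A ≤ σ)
    {x y : X} {h : ℝ → X} (hh : IsGeodesicFrom h x y)
    {a' b' : X} (ha' : a' ∈ A) (hb' : b' ∈ A) {E : ℝ}
    (hxa : dist x a' ≤ E) (hyb : dist y b' ≤ E)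
    {t : ℝ} (ht : t ∈ Set.Icc (0 : ℝ) (dist x y))
    (h1 : E + 2 * δ < t) (h2 : E + 2 * δ < dist x y - t) :
    Metric.infDist (h t) A ≤ σ + 2 * δ := by
  obtain ⟨f₁, hf₁⟩ := geodesic x a'
  obtain ⟨g₁, hg₁⟩ := geodesic a' y
  -- distance from h t to the endpoints
  have hdx : dist (h t) x = t := by
    have := hh.2.2 t ht 0 ⟨le_refl 0, dist_nonneg⟩
    rw [hh.1] at this
    rw [this, sub_zero, abs_of_nonneg ht.1]
  have hdy : dist (h t) y = dist x y - t := by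
    have := hh.2.2 t ht (dist x y) ⟨dist_nonneg, le_refl _⟩
    rw [hh.2.1] at this
    rw [this, abs_of_nonpos (by linarith [ht.2]), neg_sub]
  -- first triangle x a' y
  have hthin1 := thin x a' y f₁ g₁ h hf₁ hg₁ hh t ht
  have hcomp1 : IsCompact (f₁ '' Set.Icc (0:ℝ) (dist x a') ∪ g₁ '' Set.Icc (0:ℝ) (dist a' y)) :=
    hf₁.image_compact.union hg₁.image_compact
  obtain ⟨w, hw, hww⟩ := hcomp1.exists_infDist_eq_dist (hf₁.image_nonempty.mono
    Set.subset_union_left) (h t)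
  rw [hww] at hthin1
  rcases hw with hw | hw
  · -- w on [x, a'] : contradiction, h t too far from x
    obtain ⟨s, hs, rfl⟩ := hw
    have hwx : dist (f₁ s) x = s := by
      have := hf₁.2.2 s hs 0 ⟨le_refl 0, dist_nonneg⟩
      rw [hf₁.1] at this
      rw [this, sub_zero, abs_of_nonneg hs.1]
    have : dist (h t) x ≤ dist (h t) (f₁ s) + dist (f₁ s) x := dist_triangle _ _ _
    rw [hdx, hwx] at this
    linarith [hs.2]
  · -- w on [a', y]
    obtain ⟨s, hs, rfl⟩ := hw
    obtain ⟨f₂, hf₂⟩ := geodesic a' b'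
    obtain ⟨g₂, hg₂⟩ := geodesic b' y
    have hthin2 := thin a' b' y f₂ g₂ g₁ hf₂ hg₂ hg₁ s hs
    have hcomp2 : IsCompact (f₂ '' Set.Icc (0:ℝ) (dist a' b') ∪ g₂ '' Set.Icc (0:ℝ) (dist b' y)) :=
      hf₂.image_compact.union hg₂.image_compact
    obtain ⟨w₂, hw₂, hww₂⟩ := hcomp2.exists_infDist_eq_dist (hf₂.image_nonempty.mono
      Set.subset_union_left) (g₁ s)
    rw [hww₂] at hthin2
    rcases hw₂ with hw₂ | hw₂
    · -- w₂ on [a', b'] : quasi-convexity of A gives the bound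
      obtain ⟨u, hu, rfl⟩ := hw₂
      have hA := hqcA a' ha' b' hb' f₂ hf₂ u hu
      calc Metric.infDist (h t) A
          ≤ Metric.infDist (g₁ s) A + dist (h t) (g₁ s) :=
            Metric.infDist_le_infDist_add_dist
        _ ≤ (Metric.infDist (f₂ u) A + dist (g₁ s) (f₂ u)) + dist (h t) (g₁ s) := by
            linarith [Metric.infDist_le_infDist_add_dist (x := g₁ s) (y := f₂ u) (s := A)]
        _ ≤ σ + 2 * δ := by linarith
    · -- w₂ on [b', y] : contradiction, h t too far from y
      obtain ⟨u, hu, rfl⟩ := hw₂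
      have hwy : dist (g₂ u) y = dist b' y - u := by
        have := hg₂.2.2 u hu (dist b' y) ⟨dist_nonneg, le_refl _⟩
        rw [hg₂.2.1] at this
        rw [this, abs_of_nonpos (by linarith [hu.2]), neg_sub]
      have hby : dist b' y ≤ E := by rw [dist_comm]; exact hyb
      have : dist (h t) y ≤ dist (h t) (g₁ s) + dist (g₁ s) (g₂ u) + dist (g₂ u) y :=
        dist_triangle4 _ _ _ _
      rw [hdy, hwy] at this
      linarith [hu.1]

end Aux

/-- If `X` is a geodesic metric space with `δ`-thin triangles and `𝒜` is a geometrically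
separated family of `σ`-quasi-convex subsets, then `𝒜` is `K`-linearly geometrically separated
for some `K ≥ 0`. -/
theorem linearly_geometrically_separated_of_geometrically_separated
    {X : Type*} [MetricSpace X] (δ σ : ℝ) (hδ : 0 ≤ δ) (hσ : 0 ≤ σ)
    (geodesic : ∀ x y : X, ∃ f : ℝ → X, IsGeodesicFrom f x y)
    (thin : ∀ (x y z : X) (f g h : ℝ → X), IsGeodesicFrom f x y → IsGeodesicFrom g y z →
      IsGeodesicFrom h x z → ∀ t ∈ Set.Icc (0 : ℝ) (dist x z),
        Metric.infDist (h t)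
          (f '' Set.Icc (0 : ℝ) (dist x y) ∪ g '' Set.Icc (0 : ℝ) (dist y z)) ≤ δ)
    (𝒜 : Set (Set X))
    (hqc : ∀ A ∈ 𝒜, ∀ a ∈ A, ∀ b ∈ A, ∀ f : ℝ → X, IsGeodesicFrom f a b →
      ∀ t ∈ Set.Icc (0 : ℝ) (dist a b), Metric.infDist (f t) A ≤ σ)
    (hsep : ∀ D : ℝ, 0 ≤ D → ∃ K : ℝ, ∀ A ∈ 𝒜, ∀ B ∈ 𝒜, A ≠ B →
      EMetric.diam (Metric.cthickening D A ∩ B) ≤ ENNReal.ofReal K) :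
    ∃ K : ℝ, 0 ≤ K ∧ ∀ A ∈ 𝒜, ∀ B ∈ 𝒜, A ≠ B → ∀ D : ℝ, 1 ≤ D →
      EMetric.diam (Metric.cthickening D A ∩ B) ≤ ENNReal.ofReal (K * D) := by
  obtain ⟨K₀, hK₀⟩ := hsep (2 * σ + 2 * δ + 2) (by linarith)
  set K₀' := max K₀ 0 with hK₀'def
  have hK₀'0 : 0 ≤ K₀' := le_max_right _ _
  refine ⟨K₀' + 2 * σ + 4 * δ + 8, by linarith, ?_⟩
  intro A hA B hB hAB D hD
  apply EMetric.diam_le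
  intro x hx y hy
  rw [edist_dist]
  apply ENNReal.ofReal_le_ofReal
  obtain ⟨hxA, hxB⟩ := hx
  obtain ⟨hyA, hyB⟩ := hy
  -- endpoints are within E := D + 1 of A
  have hD0 : (0:ℝ) ≤ D := by linarith
  have getpt : ∀ z : X, z ∈ Metric.cthickening D A → ∃ a ∈ A, dist z a ≤ D + 1 := by
    intro z hz
    rw [Metric.mem_cthickening_iff] at hz
    have : EMetric.infEdist z A < ENNReal.ofReal (D + 1) :=
      lt_of_le_of_lt hz ((ENNReal.ofReal_lt_ofReal_iff (by linarith)).mpr (by linarith))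
    obtain ⟨a, haA, hda⟩ := EMetric.infEdist_lt_iff.mp this
    exact ⟨a, haA, le_of_lt (edist_lt_ofReal.mp hda)⟩
  obtain ⟨a', ha', hxa⟩ := getpt x hxA
  obtain ⟨b', hb', hyb⟩ := getpt y hyA
  set E := D + 1 with hEdef
  set d := dist x y with hddef
  by_cases hcase : d ≤ 2 * (E + 2 * δ + 1)
  · -- short geodesic: done directly
    nlinarith [mul_nonneg hK₀'0 (by linarith : (0:ℝ) ≤ D - 1),
      mul_nonneg hσ (by linarith : (0:ℝ) ≤ D - 1),
      mul_nonneg hδ (by linarith : (0:ℝ) ≤ D - 1)]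
  · push_neg at hcase
    obtain ⟨h, hh⟩ := geodesic x y
    set t₁ : ℝ := E + 2 * δ + 1 with ht₁def
    set t₂ : ℝ := d - t₁ with ht₂def
    have hE0 : (0:ℝ) ≤ E := by linarith
    have ht₁mem : t₁ ∈ Set.Icc (0:ℝ) d := ⟨by linarith, by linarith⟩
    have ht₂mem : t₂ ∈ Set.Icc (0:ℝ) d := ⟨by linarith, by linarith⟩
    -- the two "interior" points are (σ+2δ)-close to A
    have n₁ : Metric.infDist (h t₁) A ≤ σ + 2 * δ :=
      middle_near hδ geodesic thin (hqc A hA) hh ha' hb' hxa hyb ht₁mem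
        (by linarith) (by simp only [← hddef]; linarith)
    have n₂ : Metric.infDist (h t₂) A ≤ σ + 2 * δ :=
      middle_near hδ geodesic thin (hqc A hA) hh ha' hb' hxa hyb ht₂mem
        (by linarith) (by simp only [← hddef]; linarith)
    -- and σ-close to B by quasi-convexity of B
    have m₁ : Metric.infDist (h t₁) B ≤ σ := hqc B hB x hxB y hyB h hh t₁ ht₁mem
    have m₂ : Metric.infDist (h t₂) B ≤ σ := hqc B hB x hxB y hyB h hh t₂ ht₂mem
    have hBne : B.Nonempty := ⟨x, hxB⟩
    obtain ⟨q₁, hq₁B, hq₁d⟩ := (Metric.infDist_lt_iff hBne).mp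
      (lt_of_le_of_lt m₁ (by linarith : σ < σ + 1))
    obtain ⟨q₂, hq₂B, hq₂d⟩ := (Metric.infDist_lt_iff hBne).mp
      (lt_of_le_of_lt m₂ (by linarith : σ < σ + 1))
    -- q₁, q₂ lie in the (2σ+2δ+2)-thickening of A
    have hAne : A.Nonempty := ⟨a', ha'⟩
    have qmem : ∀ p q : X, Metric.infDist p A ≤ σ + 2 * δ → dist p q < σ + 1 →
        q ∈ Metric.cthickening (2 * σ + 2 * δ + 2) A := by
      intro p q hp hpq
      have : Metric.infDist q A < 2 * σ + 2 * δ + 2 := by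
        have := Metric.infDist_le_infDist_add_dist (x := q) (y := p) (s := A)
        rw [dist_comm] at hpq
        linarith
      obtain ⟨a, haA, hqa⟩ := (Metric.infDist_lt_iff hAne).mp this
      exact Metric.mem_cthickening_of_dist_le q a _ A haA (le_of_lt hqa)
    have hq₁ : q₁ ∈ Metric.cthickening (2 * σ + 2 * δ + 2) A ∩ B :=
      ⟨qmem _ _ n₁ hq₁d, hq₁B⟩
    have hq₂ : q₂ ∈ Metric.cthickening (2 * σ + 2 * δ + 2) A ∩ B :=
      ⟨qmem _ _ n₂ hq₂d, hq₂B⟩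
    -- geometric separation bounds dist q₁ q₂
    have hdiam := hK₀ A hA B hB hAB
    have hq₁q₂ : dist q₁ q₂ ≤ K₀' := by
      have h1 : edist q₁ q₂ ≤ ENNReal.ofReal K₀ :=
        le_trans (EMetric.edist_le_diam_of_mem hq₁ hq₂) hdiam
      have h2 : edist q₁ q₂ ≤ ENNReal.ofReal K₀' :=
        le_trans h1 (ENNReal.ofReal_le_ofReal (le_max_left _ _))
      exact (edist_le_ofReal hK₀'0).mp h2
    -- conclude
    have hmid : dist (h t₁) (h t₂) = t₂ - t₁ := by
      rw [hh.2.2 t₁ ht₁mem t₂ ht₂mem, abs_of_nonpos (by linarith), neg_sub]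
    have htri : dist (h t₁) (h t₂) ≤ dist (h t₁) q₁ + dist q₁ q₂ + dist q₂ (h t₂) :=
      dist_triangle4 _ _ _ _
    rw [hmid] at htri
    rw [dist_comm] at hq₂d
    have hdle : d ≤ K₀' + 2 * σ + 2 * D + 4 * δ + 6 := by
      simp only [ht₂def, ht₁def, hEdef] at htri
      linarith
    nlinarith [mul_nonneg hK₀'0 (by linarith : (0:ℝ) ≤ D - 1),
      mul_nonneg hσ (by linarith : (0:ℝ) ≤ D - 1),
      mul_nonneg hδ (by linarith : (0:ℝ) ≤ D - 1)]
end
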